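/- Let α be an m×n real matrix and φ a nonincreasing approximation function such that α is not φ-approximable (i.e., there are at most finitely many (p,q) ∈ ℤ^m × (ℤ^n \ {0}) with ‖αq + p‖ ≤ φ(‖q‖), and no (p,q) with q ≠ 0 and αq + p = 0). With Λ_Q = g_Q u_α ℤ^{m+n} and Φ(q) = q^{n/m} φ(q), for all sufficiently large Q ≥ 1 the only lattice point of Λ_Q in the box {(x,y) ∈ ℝ^m×ℝ^n : ‖x‖ ≤ 2^{−n/m} Φ(2Q), ‖y‖ ≤ 2} is the origin. -/

import Mathlib

/-- The Euclidean norm of a vector in `Fin k → ℝ`. -/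
noncomputable def euclNorm {k : ℕ} (v : Fin k → ℝ) : ℝ :=
  Real.sqrt (∑ i, (v i) ^ 2)

lemma euclNorm_smul {k : ℕ} (t : ℝ) (v : Fin k → ℝ) :
    euclNorm (fun i => t * v i) = |t| * euclNorm v := by
  unfold euclNorm
  rw [← Real.sqrt_sq_eq_abs, ← Real.sqrt_mul (sq_nonneg t), Finset.mul_sum]
  congr 1
  exact Finset.sum_congr rfl fun i _ => by ring

lemma euclNorm_le_of_sq {k : ℕ} (v : Fin k → ℝ) (c : ℝ) (hc : 0 ≤ c)
    (h : ∑ i, (v i) ^ 2 ≤ c ^ 2) : euclNorm v ≤ c := by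
  unfold euclNorm
  calc Real.sqrt (∑ i, (v i)^2) ≤ Real.sqrt (c^2) := Real.sqrt_le_sqrt h
  _ = c := Real.sqrt_sq hc

lemma one_le_euclNorm_int {k : ℕ} (p : Fin k → ℤ) (hp : p ≠ 0) :
    1 ≤ euclNorm (fun i => (p i : ℝ)) := by
  obtain ⟨i, hi⟩ := Function.ne_iff.mp hp
  simp only [Pi.zero_apply] at hi
  have h1 : (1:ℝ) ≤ ((p i : ℝ))^2 := by
    have h0 : (1:ℤ) ≤ (p i)^2 := by
      rcases Ne.lt_or_gt hi with h | h <;> nlinarith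
    exact_mod_cast h0
  have h2 : (1:ℝ) ≤ ∑ j, ((p j : ℝ))^2 :=
    h1.trans (Finset.single_le_sum (f := fun j => ((p j:ℝ))^2)
      (fun j _ => sq_nonneg _) (Finset.mem_univ i))
  calc (1:ℝ) = Real.sqrt 1 := (Real.sqrt_one).symm
  _ ≤ _ := Real.sqrt_le_sqrt h2

lemma euclNorm_pos {k : ℕ} (v : Fin k → ℝ) (hv : v ≠ 0) : 0 < euclNorm v := by
  obtain ⟨i, hi⟩ := Function.ne_iff.mp hv
  simp only [Pi.zero_apply] at hi
  apply Real.sqrt_pos.mpr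
  exact Finset.sum_pos' (fun j _ => sq_nonneg _) ⟨i, Finset.mem_univ i, by positivity⟩

/-- From non-approximability, the approximation function must drop below any
positive threshold somewhere (a Dirichlet-type pigeonhole argument). -/
lemma exists_phi_lt (m n : ℕ) (hn : 0 < n) (α : Matrix (Fin m) (Fin n) ℝ)
    (φ : ℝ → ℝ)
    (hfin : {pq : (Fin m → ℤ) × (Fin n → ℤ) | pq.2 ≠ 0 ∧
        euclNorm (α.mulVec (fun j => (pq.2 j : ℝ)) + (fun i => (pq.1 i : ℝ))) ≤
          φ (euclNorm fun j => (pq.2 j : ℝ))}.Finite)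
    (c : ℝ) (hc : 0 < c) : ∃ x₀ > 0, φ x₀ < c := by
  by_contra hcon
  push_neg at hcon
  set j₀ : Fin n := ⟨0, hn⟩ with hj₀
  set v : Fin m → ℝ := fun i => α i j₀ with hv
  obtain ⟨N', hN'⟩ := exists_nat_gt (Real.sqrt m / c)
  set N : ℕ := N' + 1 with hN
  have hN0 : (0:ℝ) < N := by positivity
  have hmN : Real.sqrt m ≤ c * N := by
    have : Real.sqrt m / c ≤ N := le_of_lt (hN'.trans_le (by exact_mod_cast Nat.le_succ N'))
    calc Real.sqrt m = (Real.sqrt m / c) * c := by field_simp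
    _ ≤ (N:ℝ) * c := by apply mul_le_mul_of_nonneg_right this hc.le
    _ = c * N := mul_comm _ _
  have hmc : (m:ℝ) ≤ c^2 * N^2 := by
    have h1 : (Real.sqrt m)^2 ≤ (c*N)^2 := by
      apply pow_le_pow_left₀ (Real.sqrt_nonneg _) hmN
    rwa [Real.sq_sqrt (Nat.cast_nonneg m), mul_pow] at h1
  have hFlt : ∀ (x : ℝ), ⌊Int.fract x * N⌋.toNat < N := by
    intro x
    have h1 : ⌊Int.fract x * N⌋ < (N:ℤ) := by
      apply Int.floor_lt.mpr
      push_cast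
      nlinarith [Int.fract_lt_one x, Int.fract_nonneg x, hN0]
    have h0 : 0 ≤ ⌊Int.fract x * N⌋ :=
      Int.floor_nonneg.mpr (mul_nonneg (Int.fract_nonneg _) hN0.le)
    omega
  set F : ℕ → (Fin m → Fin N) :=
    fun k i => ⟨⌊Int.fract ((k:ℝ) * v i) * N⌋.toNat, hFlt _⟩ with hF
  obtain ⟨y, hy⟩ := Finite.exists_infinite_fiber F
  have hfib : (F ⁻¹' {y}).Infinite := Set.infinite_coe_iff.mp hy
  set S := {pq : (Fin m → ℤ) × (Fin n → ℤ) | pq.2 ≠ 0 ∧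
        euclNorm (α.mulVec (fun j => (pq.2 j : ℝ)) + (fun i => (pq.1 i : ℝ))) ≤
          φ (euclNorm fun j => (pq.2 j : ℝ))} with hS
  obtain ⟨M, hM⟩ := (hfin.image (fun pq => pq.2 j₀)).bddAbove
  rw [mem_upperBounds] at hM
  obtain ⟨k₀, hk₀⟩ := hfib.nonempty
  obtain ⟨k, hk, hkgt⟩ := hfib.exists_gt (k₀ + M.toNat)
  set d : ℤ := (k:ℤ) - (k₀:ℤ) with hd
  have hdpos : 0 < d := by omega
  set q : Fin n → ℤ := fun j => if j = j₀ then d else 0 with hq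
  set p : Fin m → ℤ := fun i => ⌊(k₀:ℝ) * v i⌋ - ⌊(k:ℝ) * v i⌋ with hp
  have hq0 : q ≠ 0 := by
    intro h
    have := congrFun h j₀
    simp [hq] at this
    omega
  have hmv : ∀ i, α.mulVec (fun j => (q j : ℝ)) i = (d:ℝ) * v i := by
    intro i
    simp only [Matrix.mulVec, dotProduct, hq]
    rw [Finset.sum_eq_single j₀]
    · simp [hv]; ring
    · intro b _ hb; simp [hb]
    · intro h; exact absurd (Finset.mem_univ j₀) h
  have hFeq : ∀ i, ⌊Int.fract ((k:ℝ) * v i) * N⌋ = ⌊Int.fract ((k₀:ℝ) * v i) * N⌋ := by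
    intro i
    have h1 : F k = F k₀ := by
      have hk' : F k = y := hk
      have hk₀' : F k₀ = y := hk₀
      rw [hk', hk₀']
    have h2 := congrFun h1 i
    simp only [hF, Fin.mk.injEq] at h2
    have n1 : 0 ≤ ⌊Int.fract ((k:ℝ) * v i) * N⌋ :=
      Int.floor_nonneg.mpr (mul_nonneg (Int.fract_nonneg _) hN0.le)
    have n2 : 0 ≤ ⌊Int.fract ((k₀:ℝ) * v i) * N⌋ :=
      Int.floor_nonneg.mpr (mul_nonneg (Int.fract_nonneg _) hN0.le)
    omega
  have hdiff : ∀ i, |(α.mulVec (fun j => (q j : ℝ)) + (fun i => (p i : ℝ))) i| ≤ 1 / N := by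
    intro i
    have h1 : (α.mulVec (fun j => (q j : ℝ)) + (fun i => (p i : ℝ))) i
        = Int.fract ((k:ℝ) * v i) - Int.fract ((k₀:ℝ) * v i) := by
      simp only [Pi.add_apply, hmv i, hp, Int.fract]
      rw [hd]
      push_cast
      ring
    rw [h1]
    have h2 : |Int.fract ((k:ℝ) * v i) * N - Int.fract ((k₀:ℝ) * v i) * N| < 1 :=
      Int.abs_sub_lt_one_of_floor_eq_floor (hFeq i)
    rw [← sub_mul, abs_mul, abs_of_pos hN0] at h2
    rw [le_div_iff₀ hN0]
    exact h2.le
  have hnormbound : euclNorm (α.mulVec (fun j => (q j : ℝ)) + (fun i => (p i : ℝ))) ≤ c := by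
    apply euclNorm_le_of_sq _ _ hc.le
    calc ∑ i, ((α.mulVec (fun j => (q j : ℝ)) + (fun i => (p i : ℝ))) i)^2
        ≤ ∑ _i : Fin m, (1/(N:ℝ))^2 := by
          apply Finset.sum_le_sum
          intro i _
          rw [← sq_abs]
          exact pow_le_pow_left₀ (abs_nonneg _) (hdiff i) 2
    _ = m * (1/(N:ℝ))^2 := by rw [Finset.sum_const]; simp [mul_comm]
    _ ≤ c^2 := by
          rw [div_pow, one_pow, mul_one_div, div_le_iff₀ (by positivity : (0:ℝ) < (N:ℝ)^2)]
          nlinarith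
  have hqnormpos : 0 < euclNorm (fun j => ((q j : ℝ))) := by
    have h1 : (1:ℝ) ≤ euclNorm (fun j => ((q j : ℝ))) := one_le_euclNorm_int q hq0
    linarith
  have hmem : (p, q) ∈ S := by
    refine ⟨hq0, ?_⟩
    exact hnormbound.trans (hcon _ hqnormpos)
  have := hM _ (Set.mem_image_of_mem _ hmem)
  simp only [hq] at this
  simp at this
  omega

theorem stmt_9 (m n : ℕ) (hm : 0 < m) (hn : 0 < n) (α : Matrix (Fin m) (Fin n) ℝ)
    (φ : ℝ → ℝ) (hφpos : ∀ x : ℝ, 0 < x → 0 < φ x)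
    (hφmono : ∀ x y : ℝ, 0 < x → x ≤ y → φ y ≤ φ x)
    -- `α` is not `φ`-approximable: only finitely many solutions with `q ≠ 0` ...
    (hfin : {pq : (Fin m → ℤ) × (Fin n → ℤ) | pq.2 ≠ 0 ∧
        euclNorm (α.mulVec (fun j => (pq.2 j : ℝ)) + (fun i => (pq.1 i : ℝ))) ≤
          φ (euclNorm fun j => (pq.2 j : ℝ))}.Finite)
    -- ... and never an exact solution `αq + p = 0` with `q ≠ 0`
    (hexact : ∀ (p : Fin m → ℤ) (q : Fin n → ℤ), q ≠ 0 →
        α.mulVec (fun j => (q j : ℝ)) + (fun i => (p i : ℝ)) ≠ 0) :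
    -- for all sufficiently large `Q`, the only point of `Λ_Q`, i.e.
    -- `g_Q u_α (p,q) = (Q^{n/m}(αq+p), Q⁻¹ q)`, in the box
    -- `‖x‖ ≤ 2^{-n/m} Φ(2Q)`, `‖y‖ ≤ 2` is the origin, where `Φ(q) = q^{n/m} φ(q)`.
    ∃ Q₀ : ℝ, 1 ≤ Q₀ ∧ ∀ Q : ℝ, Q₀ ≤ Q → ∀ (p : Fin m → ℤ) (q : Fin n → ℤ),
      euclNorm (fun i => Q ^ ((n : ℝ) / (m : ℝ)) *
          (α.mulVec (fun j => (q j : ℝ)) i + (p i : ℝ))) ≤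
        (2 : ℝ) ^ (-(n : ℝ) / (m : ℝ)) * ((2 * Q) ^ ((n : ℝ) / (m : ℝ)) * φ (2 * Q)) →
      euclNorm (fun j => Q⁻¹ * (q j : ℝ)) ≤ 2 →
      p = 0 ∧ q = 0 := by
  classical
  set S := {pq : (Fin m → ℤ) × (Fin n → ℤ) | pq.2 ≠ 0 ∧
      euclNorm (α.mulVec (fun j => (pq.2 j : ℝ)) + (fun i => (pq.1 i : ℝ))) ≤
        φ (euclNorm fun j => (pq.2 j : ℝ))} with hS
  set g : (Fin m → ℤ) × (Fin n → ℤ) → ℝ := fun pq =>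
    euclNorm (α.mulVec (fun j => (pq.2 j : ℝ)) + (fun i => (pq.1 i : ℝ))) with hg
  have hεex : ∃ ε : ℝ, 0 < ε ∧ ε ≤ 1 ∧ ∀ pq ∈ S, ε ≤ g pq := by
    set Fs : Finset ℝ := insert 1 (hfin.image g).toFinset with hFs
    have hne : Fs.Nonempty := ⟨1, Finset.mem_insert_self _ _⟩
    refine ⟨Fs.min' hne, ?_, Finset.min'_le _ _ (Finset.mem_insert_self _ _), ?_⟩
    · have hmem := Fs.min'_mem hne
      rcases Finset.mem_insert.mp hmem with h | h
      · exact lt_of_lt_of_eq one_pos h.symm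
      · rw [Set.Finite.mem_toFinset] at h
        obtain ⟨pq, hpq, hval⟩ := h
        rw [← hval]
        exact euclNorm_pos _ (hexact pq.1 pq.2 hpq.1)
    · intro pq hpq
      apply Finset.min'_le
      rw [hFs, Finset.mem_insert]
      right
      rw [Set.Finite.mem_toFinset]
      exact ⟨pq, hpq, rfl⟩
  obtain ⟨ε, hε0, hε1, hεS⟩ := hεex
  obtain ⟨x₀, hx₀, hφx₀⟩ := exists_phi_lt m n hn α φ hfin ε hε0
  refine ⟨max 1 x₀, le_max_left _ _, ?_⟩
  intro Q hQ p q h1 h2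
  have hQ1 : (1:ℝ) ≤ Q := le_trans (le_max_left 1 x₀) hQ
  have hQ0 : (0:ℝ) < Q := by linarith
  set s : ℝ := (n:ℝ)/(m:ℝ) with hs
  have hQs : 0 < Q ^ s := Real.rpow_pos_of_pos hQ0 s
  set A : Fin m → ℝ := α.mulVec (fun j => (q j : ℝ)) + (fun i => (p i : ℝ)) with hA
  have e1 : euclNorm (fun i => Q ^ s * (α.mulVec (fun j => (q j : ℝ)) i + (p i : ℝ)))
      = Q ^ s * euclNorm A := by
    rw [show (fun i => Q ^ s * (α.mulVec (fun j => (q j : ℝ)) i + (p i : ℝ)))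
        = fun i => Q ^ s * A i from rfl, euclNorm_smul, abs_of_pos hQs]
  have e2 : (2:ℝ) ^ (-(n:ℝ)/(m:ℝ)) * ((2*Q) ^ s * φ (2*Q)) = Q ^ s * φ (2*Q) := by
    have hneg : (-(n:ℝ)/(m:ℝ)) = -s := by rw [hs]; ring
    rw [hneg, Real.rpow_neg (by norm_num : (0:ℝ) ≤ 2),
      Real.mul_rpow (by norm_num : (0:ℝ) ≤ 2) hQ0.le]
    have h2s : (2:ℝ)^s ≠ 0 := ne_of_gt (Real.rpow_pos_of_pos two_pos s)
    field_simp
  have hAφ : euclNorm A ≤ φ (2*Q) := by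
    rw [e1, e2] at h1
    exact le_of_mul_le_mul_left h1 hQs
  have hqnorm : euclNorm (fun j => (q j : ℝ)) ≤ 2 * Q := by
    have e3 : euclNorm (fun j => Q⁻¹ * (q j : ℝ))
        = Q⁻¹ * euclNorm (fun j => (q j : ℝ)) := by
      rw [euclNorm_smul, abs_of_pos (by positivity)]
    rw [e3] at h2
    have := mul_le_mul_of_nonneg_left h2 hQ0.le
    rw [← mul_assoc, mul_inv_cancel₀ (ne_of_gt hQ0), one_mul] at this
    linarith [this]
  have hφ2Q : φ (2*Q) < ε := by
    have hx₀Q : x₀ ≤ 2*Q := by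
      have : x₀ ≤ max 1 x₀ := le_max_right _ _
      linarith
    exact lt_of_le_of_lt (hφmono x₀ (2*Q) hx₀ hx₀Q) hφx₀
  by_cases hq : q = 0
  · subst hq
    constructor
    · by_contra hp
      have hA0 : A = fun i => (p i : ℝ) := by
        funext i
        simp [hA, Matrix.mulVec, dotProduct]
      have := one_le_euclNorm_int p hp
      rw [← hA0] at this
      linarith
    · rfl
  · exfalso
    have hmem : (p, q) ∈ S := by
      refine ⟨hq, ?_⟩
      have hqpos : 0 < euclNorm (fun j => (q j : ℝ)) := by
        linarith [one_le_euclNorm_int q hq]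
      exact hAφ.trans (hφmono _ _ hqpos hqnorm)
    have := hεS _ hmem
    have hgA : g (p, q) = euclNorm A := rfl
    rw [hgA] at this
    linarith
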